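/- Let q be a polynomial of bidegree (n,m) with no zeros on the closed bidisk, and let μ be its Bernstein–Szegő measure. Then for any f ∈ H^2(T^2) and any j ≥ 0, k ≥ 0 with j < n or k < m, the product f·q̃ is orthogonal in L^2(μ) to z^j w^k, where q̃ is the reflection of q at degree (n,m). -/

import Mathlib

open ComplexConjugate Metric MeasureTheory intervalIntegral
open scoped ENNReal NNReal


open ComplexConjugate

/-- Evaluation of a two-variable polynomial of bidegree at most `(n, m)`. -/
noncomputable def evalP (n m : ℕ) (a : ℕ → ℕ → ℂ) (z w : ℂ) : ℂ :=
  ∑ j ∈ Finset.range (n + 1), ∑ k ∈ Finset.range (m + 1), a j k * z ^ j * w ^ k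

/-- The reflection at bidegree `(n,m)`: coefficients are reversed and conjugated. -/
noncomputable def reflP (n m : ℕ) (a : ℕ → ℕ → ℂ) (z w : ℂ) : ℂ :=
  evalP n m (fun j k => conj (a (n - j) (m - k))) z w

/-- An `H²(T²)` function with absolutely summable Taylor coefficients `b`. -/
noncomputable def h2fun (b : ℕ × ℕ → ℂ) (z w : ℂ) : ℂ := ∑' p : ℕ × ℕ, b p * z ^ p.1 * w ^ p.2

/-- Point on the unit circle. -/
noncomputable def tor (θ : ℝ) : ℂ := Complex.exp (θ * Complex.I)

/-- If `q` is stable with Bernstein–Szegő measure `μ`, then for any `f ∈ H²(T²)` and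
`j < n` or `k < m`, the product `f·q̃` is `μ`-orthogonal to `z^j w^k`. -/


lemma tor_eq (θ : ℝ) : tor θ = circleMap 0 1 θ := by
  simp [tor, circleMap]

lemma abs_tor (θ : ℝ) : ‖tor θ‖ = 1 := by
  simp [tor, Complex.norm_exp]

lemma tor_ne_zero (θ : ℝ) : tor θ ≠ 0 := Complex.exp_ne_zero _

lemma tor_mem_sphere (θ : ℝ) : tor θ ∈ sphere (0:ℂ) 1 := by
  simp [mem_sphere_iff_norm, abs_tor]

lemma conj_tor (θ : ℝ) : conj (tor θ) = (tor θ)⁻¹ := by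
  rw [Complex.inv_def, Complex.normSq_eq_norm_sq, abs_tor]
  simp

lemma continuous_tor : Continuous tor := by
  exact Complex.continuous_exp.comp (by continuity)

/-- Cauchy: mean of `g(z) z^s` over the circle vanishes for `s ≥ 1`. -/
lemma circle_vanish (g : ℂ → ℂ) (hg : DiffContOnCl ℂ g (ball (0:ℂ) 1))
    (s : ℕ) (hs : 1 ≤ s) :
    ∫ θ in (0:ℝ)..(2*Real.pi), g (tor θ) * (tor θ)^s = 0 := by
  have hF : DiffContOnCl ℂ (fun z => g z * z^(s-1)) (ball (0:ℂ) 1) :=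
    ⟨hg.differentiableOn.mul ((differentiable_pow _).differentiableOn),
     hg.continuousOn.mul ((continuous_pow _).continuousOn)⟩
  have h0 : (∮ z in C((0:ℂ), 1), g z * z^(s-1)) = 0 := by
    refine Complex.circleIntegral_eq_zero_of_differentiable_on_off_countable zero_le_one
      Set.countable_empty ?_ ?_
    · rw [← closure_ball (0:ℂ) one_ne_zero]; exact hF.continuousOn
    · intro z hz
      exact (hF.differentiableOn.differentiableAt (isOpen_ball.mem_nhds hz.1))
  have : (∮ z in C((0:ℂ), 1), g z * z^(s-1))
      = ∫ θ in (0:ℝ)..(2*Real.pi), (tor θ * Complex.I) * (g (tor θ) * (tor θ)^(s-1)) := by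
    rw [circleIntegral]
    refine intervalIntegral.integral_congr fun θ _ => ?_
    rw [deriv_circleMap, ← tor_eq]
    simp only [smul_eq_mul, circleMap, zero_add, one_mul, ← tor_eq]
  rw [this] at h0
  have key : ∀ θ : ℝ, (tor θ * Complex.I) * (g (tor θ) * (tor θ)^(s-1))
      = Complex.I * (g (tor θ) * (tor θ)^s) := by
    intro θ
    have : (tor θ)^s = tor θ * (tor θ)^(s-1) := by
      conv_lhs => rw [show s = 1 + (s-1) by omega]
      rw [pow_add, pow_one]
    rw [this]; ring
  simp_rw [key] at h0
  rw [intervalIntegral.integral_const_mul] at h0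
  simpa [Complex.I_ne_zero] using h0

lemma tsum_circle_vanish {ι : Type*} [Countable ι] (g : ℂ → ℂ)
    (hg : DiffContOnCl ℂ g (ball (0:ℂ) 1))
    (β : ι → ℂ) (hβ : Summable fun i => ‖β i‖) (e : ι → ℕ) (d : ℕ) (hd : 1 ≤ d) :
    ∫ θ in (0:ℝ)..(2*Real.pi),
      (∑' i, β i * (tor θ)^(e i)) * ((tor θ)^d * g (tor θ)) = 0 := by
  have hgcl : ContinuousOn g (closedBall (0:ℂ) 1) := by
    rw [← closure_ball (0:ℂ) one_ne_zero]; exact hg.continuousOn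
  have hgc : Continuous fun θ : ℝ => g (tor θ) :=
    hgcl.comp_continuous continuous_tor fun θ =>
      sphere_subset_closedBall (tor_mem_sphere θ)
  obtain ⟨B, hB⟩ := (isCompact_closedBall (0:ℂ) 1).exists_bound_of_continuousOn hgcl
  set C : ℝ := max B 0 with hC
  have hC0 : 0 ≤ C := le_max_right _ _
  have hgB : ∀ θ : ℝ, ‖g (tor θ)‖ ≤ C := fun θ =>
    le_trans (hB _ (sphere_subset_closedBall (tor_mem_sphere θ))) (le_max_left _ _)
  set T : ι → ℝ → ℂ := fun i θ => β i * ((tor θ)^(e i) * ((tor θ)^d * g (tor θ))) with hT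
  have hpt : ∀ θ : ℝ, (∑' i, β i * (tor θ)^(e i)) * ((tor θ)^d * g (tor θ))
      = ∑' i, T i θ := by
    intro θ
    rw [← tsum_mul_right]
    exact tsum_congr fun i => by rw [hT]; ring
  have h2pi : (0:ℝ) ≤ 2 * Real.pi := by positivity
  rw [intervalIntegral.integral_of_le h2pi]
  calc ∫ θ in Set.Ioc 0 (2*Real.pi), (∑' i, β i * (tor θ)^(e i)) * ((tor θ)^d * g (tor θ))
      = ∫ θ in Set.Ioc 0 (2*Real.pi), ∑' i, T i θ := by
        exact integral_congr_ae (Filter.Eventually.of_forall fun θ => hpt θ)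
    _ = ∑' i, ∫ θ in Set.Ioc 0 (2*Real.pi), T i θ := by
        refine integral_tsum (fun i => ?_) ?_
        · exact ((continuous_const.mul (((continuous_tor.pow _).mul
            ((continuous_tor.pow _).mul hgc)))).aestronglyMeasurable)
        · have hbound : ∀ i, ∫⁻ θ in Set.Ioc 0 (2*Real.pi), ‖T i θ‖₊ ∂volume
              ≤ ENNReal.ofReal (‖β i‖ * C) * ENNReal.ofReal (2*Real.pi) := by
            intro i
            have : ∀ θ : ℝ, (‖T i θ‖₊ : ℝ≥0∞) ≤ ENNReal.ofReal (‖β i‖ * C) := by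
              intro θ
              rw [← ENNReal.ofReal_coe_nnreal, coe_nnnorm]
              refine ENNReal.ofReal_le_ofReal ?_
              have : ‖T i θ‖ = ‖β i‖ * (‖(tor θ)^(e i)‖ * (‖(tor θ)^d‖ * ‖g (tor θ)‖)) := by
                simp [hT]
              rw [this]
              simp only [norm_pow, abs_tor, one_pow, one_mul]
              exact mul_le_mul_of_nonneg_left (hgB θ) (norm_nonneg _)
            calc ∫⁻ θ in Set.Ioc 0 (2*Real.pi), ‖T i θ‖₊ ∂volume
                ≤ ∫⁻ _ in Set.Ioc 0 (2*Real.pi), ENNReal.ofReal (‖β i‖ * C) ∂volume :=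
                  lintegral_mono fun θ => this θ
              _ = ENNReal.ofReal (‖β i‖ * C) * ENNReal.ofReal (2*Real.pi) := by
                  rw [setLIntegral_const, Real.volume_Ioc]; norm_num
          refine ne_top_of_le_ne_top ?_ (ENNReal.tsum_le_tsum hbound)
          rw [ENNReal.tsum_mul_right]
          refine ENNReal.mul_ne_top ?_ ENNReal.ofReal_ne_top
          rw [← ENNReal.ofReal_tsum_of_nonneg (fun i => mul_nonneg (norm_nonneg _) hC0) (hβ.mul_right C)]
          exact ENNReal.ofReal_ne_top
    _ = 0 := by
        have hz : ∀ i, ∫ θ in Set.Ioc 0 (2*Real.pi), T i θ = 0 := by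
          intro i
          rw [← intervalIntegral.integral_of_le h2pi]
          have : ∀ θ : ℝ, T i θ = β i * (g (tor θ) * (tor θ)^(e i + d)) := by
            intro θ; rw [hT, pow_add]; ring
          simp_rw [this]
          rw [intervalIntegral.integral_const_mul, circle_vanish g hg (e i + d) (by omega),
            mul_zero]
        simp [hz]

lemma sum_reflect' (N : ℕ) (f : ℕ → ℂ) :
    ∑ j ∈ Finset.range (N+1), f j = ∑ j ∈ Finset.range (N+1), f (N - j) := by
  rw [← Finset.sum_range_reflect]
  exact Finset.sum_congr rfl fun j hj => by simp

lemma reflP_eq (n m : ℕ) (a : ℕ → ℕ → ℂ) {z w : ℂ} (hz0 : z ≠ 0) (hw0 : w ≠ 0)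
    (hz : conj z = z⁻¹) (hw : conj w = w⁻¹) :
    reflP n m a z w = z^n * w^m * conj (evalP n m a z w) := by
  unfold reflP evalP
  rw [sum_reflect' n]
  have step1 : ∀ j ∈ Finset.range (n+1),
      ∑ k ∈ Finset.range (m+1), conj (a (n - (n - j)) (m - k)) * z ^ (n - j) * w ^ k
      = ∑ k ∈ Finset.range (m+1), conj (a j k) * z ^ (n-j) * w ^ (m-k) := by
    intro j hj
    rw [sum_reflect' m]
    refine Finset.sum_congr rfl fun k hk => ?_
    have hj' : j ≤ n := Nat.lt_succ_iff.mp (Finset.mem_range.mp hj)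
    have hk' : k ≤ m := Nat.lt_succ_iff.mp (Finset.mem_range.mp hk)
    have e1 : n - (n - j) = j := by omega
    have e2 : m - (m - k) = k := by omega
    rw [e1, e2]
  rw [Finset.sum_congr rfl step1, map_sum, Finset.mul_sum]
  refine Finset.sum_congr rfl fun j hj => ?_
  rw [map_sum, Finset.mul_sum]
  refine Finset.sum_congr rfl fun k hk => ?_
  have hj' : j ≤ n := Nat.lt_succ_iff.mp (Finset.mem_range.mp hj)
  have hk' : k ≤ m := Nat.lt_succ_iff.mp (Finset.mem_range.mp hk)
  rw [map_mul, map_mul, map_pow, map_pow, hz, hw]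
  rw [inv_pow, inv_pow, pow_sub₀ z hz0 hj', pow_sub₀ w hw0 hk']
  ring

lemma evalP_diff_w (n m : ℕ) (a : ℕ → ℕ → ℂ) (z : ℂ) :
    Differentiable ℂ (fun w => evalP n m a z w) := by
  unfold evalP
  refine Differentiable.fun_sum fun j _ => Differentiable.fun_sum fun k _ => ?_
  exact (differentiable_const _).mul (differentiable_pow k)

lemma evalP_diff_z (n m : ℕ) (a : ℕ → ℕ → ℂ) (w : ℂ) :
    Differentiable ℂ (fun z => evalP n m a z w) := by
  unfold evalP
  refine Differentiable.fun_sum fun j _ => Differentiable.fun_sum fun k _ => ?_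
  exact ((differentiable_const _).mul (differentiable_pow j)).mul (differentiable_const _)

lemma continuous_evalP_tor (n m : ℕ) (a : ℕ → ℕ → ℂ) :
    Continuous fun p : ℝ × ℝ => evalP n m a (tor p.1) (tor p.2) := by
  unfold evalP
  refine continuous_finset_sum _ fun j _ => continuous_finset_sum _ fun k _ => ?_
  exact (continuous_const.mul (((continuous_tor.comp continuous_fst)).pow j)).mul
    ((continuous_tor.comp continuous_snd).pow k)

lemma continuous_reflP_tor (n m : ℕ) (a : ℕ → ℕ → ℂ) :
    Continuous fun p : ℝ × ℝ => reflP n m a (tor p.1) (tor p.2) :=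
  continuous_evalP_tor n m (fun j k => conj (a (n-j) (m-k)))

/-- Pointwise rewrite of the Bernstein–Szegő integrand on the torus. -/
lemma integrand_eq (n m : ℕ) (a : ℕ → ℕ → ℂ)
    (hstable : ∀ z w : ℂ, ‖z‖ ≤ 1 → ‖w‖ ≤ 1 → evalP n m a z w ≠ 0)
    (c : ℝ) (b : ℕ × ℕ → ℂ) (j k : ℕ) (θ φ : ℝ) :
    h2fun b (tor θ) (tor φ) * reflP n m a (tor θ) (tor φ) *
      conj ((tor θ) ^ j * (tor φ) ^ k) *
        ((c : ℂ) ^ 2 / (‖evalP n m a (tor θ) (tor φ)‖ : ℂ) ^ 2)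
    = h2fun b (tor θ) (tor φ) *
        (((tor θ)^n * ((tor θ)⁻¹)^j) * ((tor φ)^m * ((tor φ)⁻¹)^k) *
          ((c:ℂ)^2 / evalP n m a (tor θ) (tor φ))) := by
  have hq0 : evalP n m a (tor θ) (tor φ) ≠ 0 :=
    hstable _ _ (le_of_eq (abs_tor θ)) (le_of_eq (abs_tor φ))
  have hqc0 : conj (evalP n m a (tor θ) (tor φ)) ≠ 0 := by simpa using hq0
  have habs : ((‖evalP n m a (tor θ) (tor φ)‖ : ℂ))^2
      = evalP n m a (tor θ) (tor φ) * conj (evalP n m a (tor θ) (tor φ)) := by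
    rw [Complex.mul_conj, ← Complex.sq_norm]
    push_cast
    ring
  rw [reflP_eq n m a (tor_ne_zero θ) (tor_ne_zero φ) (conj_tor θ) (conj_tor φ)]
  rw [map_mul, map_pow, map_pow, conj_tor, conj_tor, habs]
  have key : conj (evalP n m a (tor θ) (tor φ)) *
      ((c:ℂ)^2 / (evalP n m a (tor θ) (tor φ) * conj (evalP n m a (tor θ) (tor φ))))
      = (c:ℂ)^2 / evalP n m a (tor θ) (tor φ) := by
    rw [mul_div_assoc', div_eq_div_iff (mul_ne_zero hq0 hqc0) hq0]
    ring
  calc h2fun b (tor θ) (tor φ) * (tor θ ^ n * tor φ ^ m * conj (evalP n m a (tor θ) (tor φ))) *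
        ((tor θ)⁻¹ ^ j * (tor φ)⁻¹ ^ k) *
        ((c:ℂ)^2 / (evalP n m a (tor θ) (tor φ) * conj (evalP n m a (tor θ) (tor φ))))
      = h2fun b (tor θ) (tor φ) * ((tor θ ^ n * (tor θ)⁻¹ ^ j) * (tor φ ^ m * (tor φ)⁻¹ ^ k) *
          (conj (evalP n m a (tor θ) (tor φ)) *
            ((c:ℂ)^2 / (evalP n m a (tor θ) (tor φ) * conj (evalP n m a (tor θ) (tor φ)))))) := by
        ring
    _ = _ := by rw [key]

lemma inner_phi (n m : ℕ) (a : ℕ → ℕ → ℂ)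
    (hstable : ∀ z w : ℂ, ‖z‖ ≤ 1 → ‖w‖ ≤ 1 → evalP n m a z w ≠ 0)
    (c : ℝ) (b : ℕ × ℕ → ℂ) (hb : Summable fun p => ‖b p‖)
    (j k : ℕ) (hk : k < m) (θ : ℝ) :
    ∫ φ in (0:ℝ)..(2*Real.pi),
      h2fun b (tor θ) (tor φ) * reflP n m a (tor θ) (tor φ) *
        conj ((tor θ) ^ j * (tor φ) ^ k) *
          ((c : ℂ) ^ 2 / (‖evalP n m a (tor θ) (tor φ)‖ : ℂ) ^ 2) = 0 := by
  set g : ℂ → ℂ := fun w => ((c:ℂ)^2 * (tor θ)^n * ((tor θ)⁻¹)^j) / evalP n m a (tor θ) w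
    with hgdef
  have hg : DiffContOnCl ℂ g (ball (0:ℂ) 1) := by
    refine DifferentiableOn.diffContOnCl ?_
    rw [closure_ball (0:ℂ) one_ne_zero]
    refine DifferentiableOn.div (differentiableOn_const _)
      ((evalP_diff_w n m a _).differentiableOn) fun w hw => ?_
    exact hstable _ _ (le_of_eq (abs_tor θ)) (mem_closedBall_zero_iff.mp hw)
  have hβ : Summable fun p : ℕ × ℕ => ‖b p * (tor θ)^p.1‖ := by
    have : (fun p : ℕ × ℕ => ‖b p * (tor θ)^p.1‖)
        = fun p => ‖b p‖ := by
      funext p; rw [norm_mul, norm_pow, abs_tor, one_pow, mul_one]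
    rw [this]; exact hb
  have key := tsum_circle_vanish g hg (fun p : ℕ × ℕ => b p * (tor θ)^p.1) hβ
    (fun p => p.2) (m - k) (by omega)
  rw [← key]
  refine intervalIntegral.integral_congr fun φ _ => ?_
  rw [integrand_eq n m a hstable c b j k θ φ]
  have hwk : (tor φ)^m * ((tor φ)⁻¹)^k = (tor φ)^(m-k) := by
    rw [inv_pow, ← pow_sub₀ _ (tor_ne_zero φ) hk.le]
  rw [hwk]
  show h2fun b (tor θ) (tor φ) * _ = _
  rw [h2fun, hgdef]
  ring

lemma inner_theta (n m : ℕ) (a : ℕ → ℕ → ℂ)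
    (hstable : ∀ z w : ℂ, ‖z‖ ≤ 1 → ‖w‖ ≤ 1 → evalP n m a z w ≠ 0)
    (c : ℝ) (b : ℕ × ℕ → ℂ) (hb : Summable fun p => ‖b p‖)
    (j k : ℕ) (hj : j < n) (φ : ℝ) :
    ∫ θ in (0:ℝ)..(2*Real.pi),
      h2fun b (tor θ) (tor φ) * reflP n m a (tor θ) (tor φ) *
        conj ((tor θ) ^ j * (tor φ) ^ k) *
          ((c : ℂ) ^ 2 / (‖evalP n m a (tor θ) (tor φ)‖ : ℂ) ^ 2) = 0 := by
  set g : ℂ → ℂ := fun z => ((c:ℂ)^2 * (tor φ)^m * ((tor φ)⁻¹)^k) / evalP n m a z (tor φ)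
    with hgdef
  have hg : DiffContOnCl ℂ g (ball (0:ℂ) 1) := by
    refine DifferentiableOn.diffContOnCl ?_
    rw [closure_ball (0:ℂ) one_ne_zero]
    refine DifferentiableOn.div (differentiableOn_const _)
      ((evalP_diff_z n m a _).differentiableOn) fun z hz => ?_
    exact hstable _ _ (mem_closedBall_zero_iff.mp hz) (le_of_eq (abs_tor φ))
  have hβ : Summable fun p : ℕ × ℕ => ‖b p * (tor φ)^p.2‖ := by
    have : (fun p : ℕ × ℕ => ‖b p * (tor φ)^p.2‖)
        = fun p => ‖b p‖ := by
      funext p; rw [norm_mul, norm_pow, abs_tor, one_pow, mul_one]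
    rw [this]; exact hb
  have key := tsum_circle_vanish g hg (fun p : ℕ × ℕ => b p * (tor φ)^p.2) hβ
    (fun p => p.1) (n - j) (by omega)
  rw [← key]
  refine intervalIntegral.integral_congr fun θ _ => ?_
  rw [integrand_eq n m a hstable c b j k θ φ]
  have hzj : (tor θ)^n * ((tor θ)⁻¹)^j = (tor θ)^(n-j) := by
    rw [inv_pow, ← pow_sub₀ _ (tor_ne_zero θ) hj.le]
  rw [hzj]
  rw [h2fun, hgdef]
  have hts : (∑' p : ℕ × ℕ, b p * (tor θ)^p.1 * (tor φ)^p.2)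
      = ∑' p : ℕ × ℕ, (b p * (tor φ)^p.2) * (tor θ)^p.1 :=
    tsum_congr fun p => by ring
  rw [hts]
  ring


set_option maxHeartbeats 2000000 in
theorem stmt_10 (n m : ℕ) (a : ℕ → ℕ → ℂ)
    (hstable : ∀ z w : ℂ, ‖z‖ ≤ 1 → ‖w‖ ≤ 1 → evalP n m a z w ≠ 0)
    (c : ℝ) (hc : 0 < c)
    (hprob : (1 / (2 * Real.pi) ^ 2) *
        (∫ θ in (0 : ℝ)..(2 * Real.pi), ∫ φ in (0 : ℝ)..(2 * Real.pi),
          c ^ 2 / ‖evalP n m a (tor θ) (tor φ)‖ ^ 2) = 1)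
    (b : ℕ × ℕ → ℂ) (hb : Summable fun p => ‖b p‖) :
    ∀ j k : ℕ, (j < n ∨ k < m) →
      (1 / (2 * Real.pi) ^ 2 : ℂ) *
        (∫ θ in (0 : ℝ)..(2 * Real.pi), ∫ φ in (0 : ℝ)..(2 * Real.pi),
          h2fun b (tor θ) (tor φ) * reflP n m a (tor θ) (tor φ) *
            conj ((tor θ) ^ j * (tor φ) ^ k) *
              ((c : ℂ) ^ 2 / (‖evalP n m a (tor θ) (tor φ)‖ : ℂ) ^ 2)) = 0 := by
  intro j k hjk
  have h2pi : (0:ℝ) ≤ 2 * Real.pi := by positivity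
  set F : ℝ → ℝ → ℂ := fun θ φ =>
    h2fun b (tor θ) (tor φ) * reflP n m a (tor θ) (tor φ) *
      conj ((tor θ) ^ j * (tor φ) ^ k) *
        ((c : ℂ) ^ 2 / (‖evalP n m a (tor θ) (tor φ)‖ : ℂ) ^ 2) with hF
  suffices h : (∫ θ in (0:ℝ)..(2*Real.pi), ∫ φ in (0:ℝ)..(2*Real.pi), F θ φ) = 0 by
    rw [h, mul_zero]
  rcases hjk with hj | hk
  · -- j < n : swap the order of integration first
    have hFc : Continuous (Function.uncurry F) := by
      rw [hF]
      have hh2 : Continuous fun p : ℝ × ℝ => h2fun b (tor p.1) (tor p.2) := by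
        refine continuous_tsum (u := fun p => ‖b p‖)
          (fun i => ?_) hb (fun i x => ?_)
        · exact (continuous_const.mul ((continuous_tor.comp continuous_fst).pow _)).mul
            ((continuous_tor.comp continuous_snd).pow _)
        · simp only [norm_mul, norm_pow, abs_tor, one_pow, mul_one]
          exact le_rfl
      have hrefl : Continuous fun p : ℝ × ℝ => reflP n m a (tor p.1) (tor p.2) :=
        continuous_reflP_tor n m a
      have hconj : Continuous fun p : ℝ × ℝ => conj ((tor p.1) ^ j * (tor p.2) ^ k) := by
        refine Continuous.star ?_
        exact ((continuous_tor.comp continuous_fst).pow _).mul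
          ((continuous_tor.comp continuous_snd).pow _)
      have habs : Continuous fun p : ℝ × ℝ =>
          ((c : ℂ) ^ 2 / (‖evalP n m a (tor p.1) (tor p.2)‖ : ℂ) ^ 2) := by
        refine continuous_const.div ?_ fun p => ?_
        · exact (Complex.continuous_ofReal.comp
            (continuous_norm.comp (continuous_evalP_tor n m a))).pow 2
        · exact pow_ne_zero _ (Complex.ofReal_ne_zero.mpr (norm_ne_zero_iff.mpr
            (hstable _ _ (le_of_eq (abs_tor _)) (le_of_eq (abs_tor _)))))
      exact ((hh2.mul hrefl).mul hconj).mul habs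
    have hInt : MeasureTheory.Integrable (Function.uncurry F)
        ((volume.restrict (Set.Ioc 0 (2*Real.pi))).prod
          (volume.restrict (Set.Ioc 0 (2*Real.pi)))) := by
      rw [Measure.prod_restrict, ← Measure.volume_eq_prod]
      exact (hFc.continuousOn.integrableOn_compact
        (isCompact_Icc.prod isCompact_Icc)).mono_set
        (Set.prod_mono Set.Ioc_subset_Icc_self Set.Ioc_subset_Icc_self)
    calc (∫ θ in (0:ℝ)..(2*Real.pi), ∫ φ in (0:ℝ)..(2*Real.pi), F θ φ)
        = ∫ θ in Set.Ioc 0 (2*Real.pi), ∫ φ in Set.Ioc 0 (2*Real.pi), F θ φ := by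
          rw [intervalIntegral.integral_of_le h2pi]
          refine setIntegral_congr_fun measurableSet_Ioc fun θ _ => ?_
          rw [intervalIntegral.integral_of_le h2pi]
      _ = ∫ φ in Set.Ioc 0 (2*Real.pi), ∫ θ in Set.Ioc 0 (2*Real.pi), F θ φ :=
          MeasureTheory.integral_integral_swap hInt
      _ = 0 := by
          have hz : ∀ φ : ℝ, (∫ θ in Set.Ioc 0 (2*Real.pi), F θ φ) = 0 := fun φ => by
            rw [← intervalIntegral.integral_of_le h2pi]
            exact inner_theta n m a hstable c b hb j k hj φ
          simp [hz]
  · -- k < m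
    have hz : ∀ θ : ℝ, (∫ φ in (0:ℝ)..(2*Real.pi), F θ φ) = 0 := fun θ =>
      inner_phi n m a hstable c b hb j k hk θ
    simp [hz]
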